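/- Every graph in G_2 is (theta, pyramid, long prism, broken wheel)-free, i.e., no graph in G_2 contains an induced subgraph isomorphic to a theta, a pyramid, a long prism, or a broken wheel. -/

import Mathlib

open SimpleGraph

namespace PaperSep

variable {V : Type} {W : Type}

/-- There is a walk from `a` to `b` in `G` all of whose vertices avoid the set `S`. -/
def ConnAvoid (G : SimpleGraph V) (S : Set V) (a b : V) : Prop :=
  ∃ p : G.Walk a b, ∀ v ∈ p.support, v ∉ S

/-- `S` is an `(a,b)`-separator of `G`. -/
def IsSep (G : SimpleGraph V) (a b : V) (S : Set V) : Prop :=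
  a ∉ S ∧ b ∉ S ∧ ¬ ConnAvoid G S a b

/-- `S` is a minimal `(a,b)`-separator of `G`. -/
def IsMinSep (G : SimpleGraph V) (a b : V) (S : Set V) : Prop :=
  IsSep G a b S ∧ ∀ T ⊂ S, ¬ IsSep G a b T

/-- `S` is a minimal separator of `G`. -/
def IsMinimalSeparator (G : SimpleGraph V) (S : Set V) : Prop :=
  ∃ a b : V, a ≠ b ∧ ¬ G.Adj a b ∧ IsMinSep G a b S

/-- `K` is a cutset of `G`, i.e. `G − K` is disconnected. -/
def IsCutset (G : SimpleGraph V) (K : Set V) : Prop :=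
  ∃ a b : V, a ∉ K ∧ b ∉ K ∧ ¬ ConnAvoid G K a b

/-- `K` is a minimal cutset of `G`. -/
def IsMinimalCutset (G : SimpleGraph V) (K : Set V) : Prop :=
  IsCutset G K ∧ ∀ T ⊂ K, ¬ IsCutset G T

/-- A class of finite graphs. -/
def GraphClass : Type 1 :=
  ∀ (α : Type) [Finite α], SimpleGraph α → Prop

/-- A class is hereditary if it is closed under isomorphism and induced subgraphs. -/
def Hereditary (C : GraphClass) : Prop :=
  ∀ (α : Type) [Finite α] (G : SimpleGraph α) (β : Type) [Finite β] (H : SimpleGraph β)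
    (s : Set α), Nonempty (H ≃g G.induce s) → C α G → C β H

/-- `G ∈ 𝒢_C` : every minimal separator of `G` induces a graph in `C`. -/
def MemGC (C : GraphClass) {α : Type} [Finite α] (G : SimpleGraph α) : Prop :=
  ∀ S : Set α, IsMinimalSeparator G S → C ↥S (G.induce S)

/-- The class `𝒢_C`. -/
def GCclass (C : GraphClass) : GraphClass :=
  fun α inst G => @MemGC C α inst G

/-- `S` is a union of `k` (possibly empty) cliques of `G`. -/
def UnionOfCliques (G : SimpleGraph V) (k : ℕ) (S : Set V) : Prop :=
  ∃ f : Fin k → Set V, (∀ i, G.IsClique (f i)) ∧ S = ⋃ i, f i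

/-- `G ∈ 𝒢_k` : every minimal separator of `G` is a union of `k` cliques. -/
def MemGk (k : ℕ) (G : SimpleGraph V) : Prop :=
  ∀ S : Set V, IsMinimalSeparator G S → UnionOfCliques G k S

/-- The class `𝒢_k`. -/
def Gkclass (k : ℕ) : GraphClass := fun _ _ G => MemGk k G

/-- The class `𝒞_k` of graphs whose vertex set is a union of `k` cliques. -/
def Ckclass (k : ℕ) : GraphClass := fun _ _ G => UnionOfCliques G k Set.univ

/-- An induced minor model of `H` in `G`. -/
def IsIMModel (G : SimpleGraph V) (H : SimpleGraph W) (X : W → Set V) : Prop :=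
  (∀ w, (X w).Nonempty) ∧
  (∀ u w : W, u ≠ w → Disjoint (X u) (X w)) ∧
  (∀ w, (G.induce (X w)).Connected) ∧
  (∀ u w : W, u ≠ w → (H.Adj u w ↔ ∃ a ∈ X u, ∃ b ∈ X w, G.Adj a b))

/-- `H` is an induced minor of `G`. -/
def IsInducedMinor (H : SimpleGraph W) (G : SimpleGraph V) : Prop :=
  ∃ X : W → Set V, IsIMModel G H X

/-- The class `C` is closed under induced minors. -/
def IMClosed (C : GraphClass) : Prop :=
  ∀ (α : Type) [Finite α] (G : SimpleGraph α) (β : Type) [Finite β] (H : SimpleGraph β),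
    C α G → IsInducedMinor H G → C β H

/-- The class `C` is closed under the addition of edges. -/
def EdgeAddClosed (C : GraphClass) : Prop :=
  ∀ (α : Type) [Finite α] (G : SimpleGraph α) (a b : α), a ≠ b → ¬ G.Adj a b →
    C α G → C α (G ⊔ SimpleGraph.edge a b)

/-- `G ∈ ℳ_C` : `G ∉ C` but every proper induced minor of `G` is in `C`.
(For finite graphs, the proper induced minors of `G` are exactly the induced minors of `G`
not isomorphic to `G`.) -/
def MemMC (C : GraphClass) {α : Type} [Finite α] (G : SimpleGraph α) : Prop :=
  ¬ C α G ∧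
  ∀ (β : Type) [Finite β] (H : SimpleGraph β),
    IsInducedMinor H G → IsEmpty (H ≃g G) → C β H

/-- The complete join of two graphs. -/
def join (G : SimpleGraph V) (H : SimpleGraph W) : SimpleGraph (V ⊕ W) :=
  SimpleGraph.fromRel (fun x y =>
    match x, y with
    | Sum.inl a, Sum.inl b => G.Adj a b
    | Sum.inr a, Sum.inr b => H.Adj a b
    | _, _ => True)

/-- The class `C` is closed under the addition of universal vertices (up to isomorphism). -/
def UnivAddClosed (C : GraphClass) : Prop :=
  ∀ (α : Type) [Finite α] (G : SimpleGraph α) (β : Type) [Finite β] (H : SimpleGraph β),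
    C α G → Nonempty (H ≃g join (⊥ : SimpleGraph (Fin 1)) G) → C β H

/-- `G` has a universal vertex. -/
def HasUniversalVertex (G : SimpleGraph V) : Prop :=
  ∃ v : V, ∀ w : V, w ≠ v → G.Adj v w



/-- `G` is a theta: two nonadjacent vertices joined by three internally disjoint induced
paths of length at least two, with no other vertices or edges
(equivalently, a subdivision of `K_{2,3}`). -/
def IsTheta (G : SimpleGraph V) : Prop :=
  ∃ (a b : V) (P₁ P₂ P₃ : G.Walk a b),
    a ≠ b ∧
    P₁.IsPath ∧ P₂.IsPath ∧ P₃.IsPath ∧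
    2 ≤ P₁.length ∧ 2 ≤ P₂.length ∧ 2 ≤ P₃.length ∧
    (∀ v : V, v ∈ P₁.support → v ∈ P₂.support → v = a ∨ v = b) ∧
    (∀ v : V, v ∈ P₁.support → v ∈ P₃.support → v = a ∨ v = b) ∧
    (∀ v : V, v ∈ P₂.support → v ∈ P₃.support → v = a ∨ v = b) ∧
    (∀ v : V, v ∈ P₁.support ∨ v ∈ P₂.support ∨ v ∈ P₃.support) ∧
    (∀ u v : V, G.Adj u v ↔
      s(u, v) ∈ P₁.edges ∨ s(u, v) ∈ P₂.edges ∨ s(u, v) ∈ P₃.edges)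

/-- `G` is a pyramid: an apex `a` joined to a triangle `b₁b₂b₃` by three paths sharing only
`a`, at least two of which have length at least two, with no other vertices or edges. -/
def IsPyramid (G : SimpleGraph V) : Prop :=
  ∃ (a b₁ b₂ b₃ : V) (P₁ : G.Walk a b₁) (P₂ : G.Walk a b₂) (P₃ : G.Walk a b₃),
    G.Adj b₁ b₂ ∧ G.Adj b₁ b₃ ∧ G.Adj b₂ b₃ ∧
    P₁.IsPath ∧ P₂.IsPath ∧ P₃.IsPath ∧
    1 ≤ P₁.length ∧ 1 ≤ P₂.length ∧ 1 ≤ P₃.length ∧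
    ((2 ≤ P₁.length ∧ 2 ≤ P₂.length) ∨ (2 ≤ P₁.length ∧ 2 ≤ P₃.length) ∨
      (2 ≤ P₂.length ∧ 2 ≤ P₃.length)) ∧
    (∀ v : V, v ∈ P₁.support → v ∈ P₂.support → v = a) ∧
    (∀ v : V, v ∈ P₁.support → v ∈ P₃.support → v = a) ∧
    (∀ v : V, v ∈ P₂.support → v ∈ P₃.support → v = a) ∧
    (∀ v : V, v ∈ P₁.support ∨ v ∈ P₂.support ∨ v ∈ P₃.support) ∧
    (∀ u v : V, G.Adj u v ↔
      s(u, v) ∈ P₁.edges ∨ s(u, v) ∈ P₂.edges ∨ s(u, v) ∈ P₃.edges ∨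
      s(u, v) = s(b₁, b₂) ∨ s(u, v) = s(b₁, b₃) ∨ s(u, v) = s(b₂, b₃))

/-- `G` is a prism: two disjoint triangles joined by three pairwise disjoint paths, with no
other vertices or edges. -/
def IsPrism (G : SimpleGraph V) : Prop :=
  ∃ (a₁ a₂ a₃ b₁ b₂ b₃ : V) (P₁ : G.Walk a₁ b₁) (P₂ : G.Walk a₂ b₂) (P₃ : G.Walk a₃ b₃),
    G.Adj a₁ a₂ ∧ G.Adj a₁ a₃ ∧ G.Adj a₂ a₃ ∧
    G.Adj b₁ b₂ ∧ G.Adj b₁ b₃ ∧ G.Adj b₂ b₃ ∧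
    P₁.IsPath ∧ P₂.IsPath ∧ P₃.IsPath ∧
    1 ≤ P₁.length ∧ 1 ≤ P₂.length ∧ 1 ≤ P₃.length ∧
    (∀ v : V, v ∈ P₁.support → v ∈ P₂.support → False) ∧
    (∀ v : V, v ∈ P₁.support → v ∈ P₃.support → False) ∧
    (∀ v : V, v ∈ P₂.support → v ∈ P₃.support → False) ∧
    (∀ v : V, v ∈ P₁.support ∨ v ∈ P₂.support ∨ v ∈ P₃.support) ∧
    (∀ u v : V, G.Adj u v ↔
      s(u, v) ∈ P₁.edges ∨ s(u, v) ∈ P₂.edges ∨ s(u, v) ∈ P₃.edges ∨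
      s(u, v) = s(a₁, a₂) ∨ s(u, v) = s(a₁, a₃) ∨ s(u, v) = s(a₂, a₃) ∨
      s(u, v) = s(b₁, b₂) ∨ s(u, v) = s(b₁, b₃) ∨ s(u, v) = s(b₂, b₃))

/-- `G` is a long prism: a prism other than the complement of `C₆`, i.e. a prism in which at
least one of the three paths has length at least two. -/
def IsLongPrism (G : SimpleGraph V) : Prop :=
  ∃ (a₁ a₂ a₃ b₁ b₂ b₃ : V) (P₁ : G.Walk a₁ b₁) (P₂ : G.Walk a₂ b₂) (P₃ : G.Walk a₃ b₃),
    G.Adj a₁ a₂ ∧ G.Adj a₁ a₃ ∧ G.Adj a₂ a₃ ∧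
    G.Adj b₁ b₂ ∧ G.Adj b₁ b₃ ∧ G.Adj b₂ b₃ ∧
    P₁.IsPath ∧ P₂.IsPath ∧ P₃.IsPath ∧
    1 ≤ P₁.length ∧ 1 ≤ P₂.length ∧ 1 ≤ P₃.length ∧
    (2 ≤ P₁.length ∨ 2 ≤ P₂.length ∨ 2 ≤ P₃.length) ∧
    (∀ v : V, v ∈ P₁.support → v ∈ P₂.support → False) ∧
    (∀ v : V, v ∈ P₁.support → v ∈ P₃.support → False) ∧
    (∀ v : V, v ∈ P₂.support → v ∈ P₃.support → False) ∧
    (∀ v : V, v ∈ P₁.support ∨ v ∈ P₂.support ∨ v ∈ P₃.support) ∧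
    (∀ u v : V, G.Adj u v ↔
      s(u, v) ∈ P₁.edges ∨ s(u, v) ∈ P₂.edges ∨ s(u, v) ∈ P₃.edges ∨
      s(u, v) = s(a₁, a₂) ∨ s(u, v) = s(a₁, a₃) ∨ s(u, v) = s(a₂, a₃) ∨
      s(u, v) = s(b₁, b₂) ∨ s(u, v) = s(b₁, b₃) ∨ s(u, v) = s(b₂, b₃))

/-- `G` is a wheel: a hole (chordless cycle of length at least four) together with one
additional vertex having at least three neighbors on the hole. -/
def IsWheel (G : SimpleGraph V) : Prop :=
  ∃ (v x : V) (c : G.Walk x x),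
    c.IsCycle ∧ 4 ≤ c.length ∧ v ∉ c.support ∧
    (∀ u : V, u = v ∨ u ∈ c.support) ∧
    (∀ u w : V, u ∈ c.support → w ∈ c.support → G.Adj u w → s(u, w) ∈ c.edges) ∧
    3 ≤ {u : V | u ∈ c.support ∧ G.Adj v u}.ncard

/-- `G` is a broken wheel: a wheel in which the neighbors of the additional vertex induce a
disconnected subgraph of the hole. -/
def IsBrokenWheel (G : SimpleGraph V) : Prop :=
  ∃ (v x : V) (c : G.Walk x x),
    c.IsCycle ∧ 4 ≤ c.length ∧ v ∉ c.support ∧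
    (∀ u : V, u = v ∨ u ∈ c.support) ∧
    (∀ u w : V, u ∈ c.support → w ∈ c.support → G.Adj u w → s(u, w) ∈ c.edges) ∧
    3 ≤ {u : V | u ∈ c.support ∧ G.Adj v u}.ncard ∧
    ¬ (G.induce {u : V | u ∈ c.support ∧ G.Adj v u}).Connected

/-- `G` is diamond-free: it has no induced subgraph isomorphic to `K₄` minus an edge. -/
def DiamondFree (G : SimpleGraph V) : Prop :=
  ¬ ∃ a b c d : V, c ≠ d ∧ G.Adj a b ∧ G.Adj a c ∧ G.Adj a d ∧ G.Adj b c ∧ G.Adj b d ∧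
    ¬ G.Adj c d

/-- The short `n`-prism: two `n`-vertex cliques joined by a perfect matching. -/
def completePrism (n : ℕ) : SimpleGraph (Fin n ⊕ Fin n) :=
  SimpleGraph.fromRel (fun x y =>
    match x, y with
    | Sum.inl _, Sum.inl _ => True
    | Sum.inr _, Sum.inr _ => True
    | Sum.inl i, Sum.inr j => i = j
    | Sum.inr i, Sum.inl j => i = j)

/-- `G` is a complete prism, i.e. a short `n`-prism for some `n ≥ 3`. -/
def IsCompletePrism (G : SimpleGraph V) : Prop :=
  ∃ n : ℕ, 3 ≤ n ∧ Nonempty (G ≃g completePrism n)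

/-- `G` is a cycle. -/
def IsCycleGraph (G : SimpleGraph V) : Prop :=
  ∃ n : ℕ, 3 ≤ n ∧ Nonempty (G ≃g cycleGraph n)

/-- `G` is a complete graph. -/
def IsCompleteGraph (G : SimpleGraph V) : Prop :=
  ∀ u v : V, u ≠ v → G.Adj u v

/-- `G` has a clique-cutset. -/
def HasCliqueCutset (G : SimpleGraph V) : Prop :=
  ∃ K : Set V, G.IsClique K ∧ IsCutset G K



/-- closure lemma -/
lemma walk_hits {G : SimpleGraph V} {A S : Set V} {a b : V}
    (hcl : ∀ u w, u ∈ A → G.Adj u w → w ∈ A ∪ S) (p : G.Walk a b) (ha : a ∈ A)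
    (hb : b ∉ A) : ∃ v ∈ p.support, v ∈ S := by
  revert ha hb
  induction p with
  | nil => exact fun ha hb => absurd ha hb
  | @cons u c w h p ih =>
    intro ha hb
    rcases hcl u c ha h with hc | hc
    · obtain ⟨v, hv, hvS⟩ := ih hc hb
      exact ⟨v, by simp [hv], hvS⟩
    · exact ⟨c, by simp, hc⟩

lemma not_connAvoid {G : SimpleGraph V} {A S : Set V} {a b : V}
    (hcl : ∀ u w, u ∈ A → G.Adj u w → w ∈ A ∪ S) (ha : a ∈ A) (hb : b ∉ A) :
    ¬ ConnAvoid G S a b := by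
  rintro ⟨p, hp⟩
  obtain ⟨v, hv, hvS⟩ := walk_hits hcl p ha hb
  exact hp v hv hvS

/-- pigeonhole: a 3-element independent set is not a union of two cliques -/
lemma not_union_two {G : SimpleGraph V} {S : Set V} {x y z : V}
    (hx : x ∈ S) (hy : y ∈ S) (hz : z ∈ S)
    (hxy : x ≠ y) (hxz : x ≠ z) (hyz : y ≠ z)
    (nxy : ¬ G.Adj x y) (nxz : ¬ G.Adj x z) (nyz : ¬ G.Adj y z)
    (h : UnionOfCliques G 2 S) : False := by
  obtain ⟨f, hcl, rfl⟩ := h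
  have mem2 : ∀ w, w ∈ ⋃ i, f i → w ∈ f 0 ∨ w ∈ f 1 := by
    intro w hw
    rw [Set.mem_iUnion] at hw
    obtain ⟨i, hi⟩ := hw
    have : i = 0 ∨ i = 1 := by omega
    rcases this with rfl | rfl
    · exact Or.inl hi
    · exact Or.inr hi
  rcases mem2 x hx with h1 | h1 <;> rcases mem2 y hy with h2 | h2 <;>
    rcases mem2 z hz with h3 | h3
  · exact nxy (hcl 0 h1 h2 hxy)
  · exact nxy (hcl 0 h1 h2 hxy)
  · exact nxz (hcl 0 h1 h3 hxz)
  · exact nyz (hcl 1 h2 h3 hyz)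
  · exact nyz (hcl 0 h2 h3 hyz)
  · exact nxz (hcl 1 h1 h3 hxz)
  · exact nxy (hcl 1 h1 h2 hxy)
  · exact nxy (hcl 1 h1 h2 hxy)

/-- shrink a separator to a minimal one -/
lemma exists_minsep_subset [Finite V] {G : SimpleGraph V} {a b : V} :
    ∀ T : Set V, IsSep G a b T → ∃ T' ⊆ T, IsMinSep G a b T' := by
  have key : ∀ (n : ℕ) (T : Set V), T.ncard = n → IsSep G a b T →
      ∃ T' ⊆ T, IsMinSep G a b T' := by
    intro n
    induction n using Nat.strong_induction_on with
    | _ n ih =>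
      intro T hn hT
      by_cases hmin : ∀ T'' ⊂ T, ¬ IsSep G a b T''
      · exact ⟨T, subset_rfl, hT, hmin⟩
      · push_neg at hmin
        obtain ⟨T'', hsub, hsep⟩ := hmin
        have hlt : T''.ncard < n := by
          rw [← hn]; exact Set.ncard_lt_ncard hsub (Set.toFinite T)
        obtain ⟨T', hT', hmin'⟩ := ih _ hlt T'' rfl hsep
        exact ⟨T', hT'.trans hsub.subset, hmin'⟩
  exact fun T hT => key T.ncard T rfl hT

/-- second vertex helper: edge from the head of a cons-path determines the neighbor -/
lemma head_edge_eq {G : SimpleGraph V} {u c b w : V} {h : G.Adj u c} {p : G.Walk c b}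
    (hu : u ∉ p.support) (he : s(u, w) ∈ (Walk.cons h p).edges) : w = c := by
  rw [Walk.edges_cons, List.mem_cons] at he
  rcases he with he | he
  · rw [Sym2.eq_iff] at he
    rcases he with ⟨-, rfl⟩ | ⟨rfl, rfl⟩
    · rfl
    · exact absurd p.start_mem_support hu
  · exact absurd (p.fst_mem_support_of_mem_edges he) hu

/-- lift a walk with support in s to the induced subgraph -/
lemma lift_walk {G : SimpleGraph V} {s : Set V} :
    ∀ {u w : V} (p : G.Walk u w) (hu : u ∈ s) (hw : w ∈ s),
      (∀ v ∈ p.support, v ∈ s) →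
      ∃ q : (G.induce s).Walk ⟨u, hu⟩ ⟨w, hw⟩, ∀ y ∈ q.support, (y : V) ∈ p.support := by
  intro u w p
  induction p with
  | nil =>
    intro hu hw _
    exact ⟨Walk.nil, by simp⟩
  | @cons u c w h p ih =>
    intro hu hw hs
    have hc : c ∈ s := hs c (by simp)
    obtain ⟨q, hq⟩ := ih hc hw (fun v hv => hs v (by simp [hv]))
    refine ⟨Walk.cons (by simpa using h) q, ?_⟩
    intro y hy
    rw [Walk.support_cons, List.mem_cons] at hy
    rcases hy with rfl | hy
    · simp
    · simp [hq y hy]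

def inducedHom (G : SimpleGraph V) (s : Set V) : G.induce s →g G :=
  ⟨Subtype.val, fun {a b} h => by simpa using h⟩

lemma theta_false {G : SimpleGraph V} (ht : IsTheta G) (hG : MemGk 2 G) : False := by
  classical
  obtain ⟨a, b, P₁, P₂, P₃, hab, hp1, hp2, hp3, hl1, hl2, hl3, h12, h13, h23, hcov, hiff⟩ := ht
  clear hcov
  cases P₁ with
  | nil => simp at hl1
  | @cons _ c₁ _ h₁ Q₁ =>
  cases P₂ with
  | nil => simp at hl2
  | @cons _ c₂ _ h₂ Q₂ =>
  cases P₃ with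
  | nil => simp at hl3
  | @cons _ c₃ _ h₃ Q₃ =>
  rw [Walk.cons_isPath_iff] at hp1 hp2 hp3
  obtain ⟨hQ1, ha1⟩ := hp1
  obtain ⟨hQ2, ha2⟩ := hp2
  obtain ⟨hQ3, ha3⟩ := hp3
  simp only [Walk.length_cons] at hl1 hl2 hl3
  have hq1 : 1 ≤ Q₁.length := by omega
  have hq2 : 1 ≤ Q₂.length := by omega
  have hq3 : 1 ≤ Q₃.length := by omega
  have cne_a1 : c₁ ≠ a := fun e => ha1 (e ▸ Q₁.start_mem_support)
  have cne_a2 : c₂ ≠ a := fun e => ha2 (e ▸ Q₂.start_mem_support)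
  have cne_a3 : c₃ ≠ a := fun e => ha3 (e ▸ Q₃.start_mem_support)
  have bne1 : c₁ ≠ b := by
    rintro rfl
    rw [Walk.isPath_iff_eq_nil] at hQ1
    rw [hQ1] at hq1; simp at hq1
  have bne2 : c₂ ≠ b := by
    rintro rfl
    rw [Walk.isPath_iff_eq_nil] at hQ2
    rw [hQ2] at hq2; simp at hq2
  have bne3 : c₃ ≠ b := by
    rintro rfl
    rw [Walk.isPath_iff_eq_nil] at hQ3
    rw [hQ3] at hq3; simp at hq3
  have mem1 : c₁ ∈ (Walk.cons h₁ Q₁).support := by simp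
  have mem2 : c₂ ∈ (Walk.cons h₂ Q₂).support := by simp
  have mem3 : c₃ ∈ (Walk.cons h₃ Q₃).support := by simp
  have not12 : c₁ ∉ (Walk.cons h₂ Q₂).support := fun hm => by
    rcases h12 c₁ mem1 hm with e | e
    exacts [cne_a1 e, bne1 e]
  have not13 : c₁ ∉ (Walk.cons h₃ Q₃).support := fun hm => by
    rcases h13 c₁ mem1 hm with e | e
    exacts [cne_a1 e, bne1 e]
  have not21 : c₂ ∉ (Walk.cons h₁ Q₁).support := fun hm => by
    rcases h12 c₂ hm mem2 with e | e
    exacts [cne_a2 e, bne2 e]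
  have not23 : c₂ ∉ (Walk.cons h₃ Q₃).support := fun hm => by
    rcases h23 c₂ mem2 hm with e | e
    exacts [cne_a2 e, bne2 e]
  have not31 : c₃ ∉ (Walk.cons h₁ Q₁).support := fun hm => by
    rcases h13 c₃ hm mem3 with e | e
    exacts [cne_a3 e, bne3 e]
  have not32 : c₃ ∉ (Walk.cons h₂ Q₂).support := fun hm => by
    rcases h23 c₃ hm mem3 with e | e
    exacts [cne_a3 e, bne3 e]
  have d12 : c₁ ≠ c₂ := fun e => not12 (by rw [e]; exact mem2)
  have d13 : c₁ ≠ c₃ := fun e => not13 (by rw [e]; exact mem3)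
  have d23 : c₂ ≠ c₃ := fun e => not23 (by rw [e]; exact mem3)
  have nbr : ∀ w, G.Adj a w → w = c₁ ∨ w = c₂ ∨ w = c₃ := by
    intro w hw
    rcases (hiff a w).1 hw with he | he | he
    · exact Or.inl (head_edge_eq ha1 he)
    · exact Or.inr (Or.inl (head_edge_eq ha2 he))
    · exact Or.inr (Or.inr (head_edge_eq ha3 he))
  have n12 : ¬ G.Adj c₁ c₂ := by
    intro hw
    rcases (hiff c₁ c₂).1 hw with he | he | he
    · exact not21 ((Walk.cons h₁ Q₁).snd_mem_support_of_mem_edges he)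
    · exact not12 ((Walk.cons h₂ Q₂).fst_mem_support_of_mem_edges he)
    · exact not13 ((Walk.cons h₃ Q₃).fst_mem_support_of_mem_edges he)
  have n13 : ¬ G.Adj c₁ c₃ := by
    intro hw
    rcases (hiff c₁ c₃).1 hw with he | he | he
    · exact not31 ((Walk.cons h₁ Q₁).snd_mem_support_of_mem_edges he)
    · exact not12 ((Walk.cons h₂ Q₂).fst_mem_support_of_mem_edges he)
    · exact not13 ((Walk.cons h₃ Q₃).fst_mem_support_of_mem_edges he)
  have n23 : ¬ G.Adj c₂ c₃ := by
    intro hw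
    rcases (hiff c₂ c₃).1 hw with he | he | he
    · exact not21 ((Walk.cons h₁ Q₁).fst_mem_support_of_mem_edges he)
    · exact not32 ((Walk.cons h₂ Q₂).snd_mem_support_of_mem_edges he)
    · exact not23 ((Walk.cons h₃ Q₃).fst_mem_support_of_mem_edges he)
  have nab : ¬ G.Adj a b := by
    intro hw
    rcases (hiff a b).1 hw with he | he | he
    · exact bne1 (head_edge_eq ha1 he).symm
    · exact bne2 (head_edge_eq ha2 he).symm
    · exact bne3 (head_edge_eq ha3 he).symm
  set S : Set V := {c₁, c₂, c₃} with hS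
  have haS : a ∉ S := by
    simp only [hS, Set.mem_insert_iff, Set.mem_singleton_iff]
    push_neg
    exact ⟨fun e => cne_a1 e.symm, fun e => cne_a2 e.symm, fun e => cne_a3 e.symm⟩
  have hbS : b ∉ S := by
    simp only [hS, Set.mem_insert_iff, Set.mem_singleton_iff]
    push_neg
    exact ⟨fun e => bne1 e.symm, fun e => bne2 e.symm, fun e => bne3 e.symm⟩
  have hminsep : IsMinSep G a b S := by
    constructor
    · refine ⟨haS, hbS, ?_⟩
      rintro ⟨p, hp⟩
      cases p with
      | nil => exact hab rfl
      | @cons _ w _ hadj q =>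
        refine hp w (by simp) ?_
        rcases nbr w hadj with rfl | rfl | rfl
        · exact Set.mem_insert _ _
        · exact Set.mem_insert_of_mem _ (Set.mem_insert _ _)
        · exact Set.mem_insert_of_mem _ (Set.mem_insert_of_mem _ rfl)
    · intro T hT hsepT
      obtain ⟨x, hxS, hxT⟩ := Set.exists_of_ssubset hT
      apply hsepT.2.2
      rcases hxS with rfl | rfl | rfl
      · refine ⟨Walk.cons h₁ Q₁, ?_⟩
        intro v hv hvT
        rcases hT.subset hvT with rfl | rfl | rfl
        exacts [hxT hvT, not21 hv, not31 hv]
      · refine ⟨Walk.cons h₂ Q₂, ?_⟩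
        intro v hv hvT
        rcases hT.subset hvT with rfl | rfl | rfl
        exacts [not12 hv, hxT hvT, not32 hv]
      · refine ⟨Walk.cons h₃ Q₃, ?_⟩
        intro v hv hvT
        rcases hT.subset hvT with rfl | rfl | rfl
        exacts [not13 hv, not23 hv, hxT hvT]
  have hU := hG S ⟨a, b, hab, nab, hminsep⟩
  exact not_union_two (by simp [hS]) (by simp [hS]) (by simp [hS]) d12 d13 d23 n12 n13 n23 hU

lemma pyramid_core {G : SimpleGraph V} {a b₁ b₂ b₃ : V}
    {P₁ : G.Walk a b₁} {P₂ : G.Walk a b₂} {P₃ : G.Walk a b₃}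
    (e12 : G.Adj b₁ b₂) (e13 : G.Adj b₁ b₃) (e23 : G.Adj b₂ b₃)
    (hp1 : P₁.IsPath) (hp2 : P₂.IsPath) (hp3 : P₃.IsPath)
    (hl1 : 2 ≤ P₁.length) (hl2 : 2 ≤ P₂.length) (hl3 : 1 ≤ P₃.length)
    (h12 : ∀ v : V, v ∈ P₁.support → v ∈ P₂.support → v = a)
    (h13 : ∀ v : V, v ∈ P₁.support → v ∈ P₃.support → v = a)
    (h23 : ∀ v : V, v ∈ P₂.support → v ∈ P₃.support → v = a)
    (hiff : ∀ u v : V, G.Adj u v ↔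
      s(u, v) ∈ P₁.edges ∨ s(u, v) ∈ P₂.edges ∨ s(u, v) ∈ P₃.edges ∨
      s(u, v) = s(b₁, b₂) ∨ s(u, v) = s(b₁, b₃) ∨ s(u, v) = s(b₂, b₃))
    (hG : MemGk 2 G) : False := by
  classical
  cases P₁ with
  | nil => simp at hl1
  | @cons _ c₁ _ h₁ Q₁ =>
  cases P₂ with
  | nil => simp at hl2
  | @cons _ c₂ _ h₂ Q₂ =>
  cases P₃ with
  | nil => simp at hl3
  | @cons _ c₃ _ h₃ Q₃ =>
  rw [Walk.cons_isPath_iff] at hp1 hp2 hp3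
  obtain ⟨hQ1, ha1⟩ := hp1
  obtain ⟨hQ2, ha2⟩ := hp2
  obtain ⟨hQ3, ha3⟩ := hp3
  simp only [Walk.length_cons] at hl1 hl2 hl3
  have hq1 : 1 ≤ Q₁.length := by omega
  have hq2 : 1 ≤ Q₂.length := by omega
  have cne_a1 : c₁ ≠ a := fun e => ha1 (e ▸ Q₁.start_mem_support)
  have cne_a2 : c₂ ≠ a := fun e => ha2 (e ▸ Q₂.start_mem_support)
  have cne_a3 : c₃ ≠ a := fun e => ha3 (e ▸ Q₃.start_mem_support)
  have c1b1 : c₁ ≠ b₁ := by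
    rintro rfl
    rw [Walk.isPath_iff_eq_nil] at hQ1
    rw [hQ1] at hq1; simp at hq1
  have c2b2 : c₂ ≠ b₂ := by
    rintro rfl
    rw [Walk.isPath_iff_eq_nil] at hQ2
    rw [hQ2] at hq2; simp at hq2
  have aneb1 : a ≠ b₁ := fun e => ha1 (by rw [e]; exact Q₁.end_mem_support)
  have aneb2 : a ≠ b₂ := fun e => ha2 (by rw [e]; exact Q₂.end_mem_support)
  have aneb3 : a ≠ b₃ := fun e => ha3 (by rw [e]; exact Q₃.end_mem_support)
  have mem1 : c₁ ∈ (Walk.cons h₁ Q₁).support := by simp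
  have mem2 : c₂ ∈ (Walk.cons h₂ Q₂).support := by simp
  have mem3 : c₃ ∈ (Walk.cons h₃ Q₃).support := by simp
  have b1not2 : b₁ ∉ (Walk.cons h₂ Q₂).support := fun hm =>
    aneb1 (h12 b₁ (Walk.end_mem_support _) hm).symm
  have b1not3 : b₁ ∉ (Walk.cons h₃ Q₃).support := fun hm =>
    aneb1 (h13 b₁ (Walk.end_mem_support _) hm).symm
  have b2not1 : b₂ ∉ (Walk.cons h₁ Q₁).support := fun hm =>
    aneb2 (h12 b₂ hm (Walk.end_mem_support _)).symm
  have b2not3 : b₂ ∉ (Walk.cons h₃ Q₃).support := fun hm =>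
    aneb2 (h23 b₂ (Walk.end_mem_support _) hm).symm
  have b3not1 : b₃ ∉ (Walk.cons h₁ Q₁).support := fun hm =>
    aneb3 (h13 b₃ hm (Walk.end_mem_support _)).symm
  have b3not2 : b₃ ∉ (Walk.cons h₂ Q₂).support := fun hm =>
    aneb3 (h23 b₃ hm (Walk.end_mem_support _)).symm
  have not12 : c₁ ∉ (Walk.cons h₂ Q₂).support := fun hm => cne_a1 (h12 c₁ mem1 hm)
  have not13 : c₁ ∉ (Walk.cons h₃ Q₃).support := fun hm => cne_a1 (h13 c₁ mem1 hm)
  have not21 : c₂ ∉ (Walk.cons h₁ Q₁).support := fun hm => cne_a2 (h12 c₂ hm mem2)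
  have not23 : c₂ ∉ (Walk.cons h₃ Q₃).support := fun hm => cne_a2 (h23 c₂ mem2 hm)
  have not31 : c₃ ∉ (Walk.cons h₁ Q₁).support := fun hm => cne_a3 (h13 c₃ hm mem3)
  have not32 : c₃ ∉ (Walk.cons h₂ Q₂).support := fun hm => cne_a3 (h23 c₃ hm mem3)
  have d12 : c₁ ≠ c₂ := fun e => not12 (by rw [e]; exact mem2)
  have d13 : c₁ ≠ c₃ := fun e => not13 (by rw [e]; exact mem3)
  have d23 : c₂ ≠ c₃ := fun e => not23 (by rw [e]; exact mem3)
  have c1b2 : c₁ ≠ b₂ := fun e => b2not1 (by rw [← e]; exact mem1)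
  have c1b3 : c₁ ≠ b₃ := fun e => b3not1 (by rw [← e]; exact mem1)
  have c2b1 : c₂ ≠ b₁ := fun e => b1not2 (by rw [← e]; exact mem2)
  have c2b3 : c₂ ≠ b₃ := fun e => b3not2 (by rw [← e]; exact mem2)
  have c3b1 : c₃ ≠ b₁ := fun e => b1not3 (by rw [← e]; exact mem3)
  -- nonadjacency of the c's
  have n12 : ¬ G.Adj c₁ c₂ := by
    intro hw
    rcases (hiff c₁ c₂).1 hw with he | he | he | he | he | he
    · exact not21 ((Walk.cons h₁ Q₁).snd_mem_support_of_mem_edges he)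
    · exact not12 ((Walk.cons h₂ Q₂).fst_mem_support_of_mem_edges he)
    · exact not13 ((Walk.cons h₃ Q₃).fst_mem_support_of_mem_edges he)
    all_goals rw [Sym2.eq_iff] at he
    · rcases he with ⟨e, -⟩ | ⟨e, -⟩; exacts [c1b1 e, c1b2 e]
    · rcases he with ⟨e, -⟩ | ⟨e, -⟩; exacts [c1b1 e, c1b3 e]
    · rcases he with ⟨e, -⟩ | ⟨e, -⟩; exacts [c1b2 e, c1b3 e]
  have n13 : ¬ G.Adj c₁ c₃ := by
    intro hw
    rcases (hiff c₁ c₃).1 hw with he | he | he | he | he | he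
    · exact not31 ((Walk.cons h₁ Q₁).snd_mem_support_of_mem_edges he)
    · exact not12 ((Walk.cons h₂ Q₂).fst_mem_support_of_mem_edges he)
    · exact not13 ((Walk.cons h₃ Q₃).fst_mem_support_of_mem_edges he)
    all_goals rw [Sym2.eq_iff] at he
    · rcases he with ⟨e, -⟩ | ⟨e, -⟩; exacts [c1b1 e, c1b2 e]
    · rcases he with ⟨e, -⟩ | ⟨e, -⟩; exacts [c1b1 e, c1b3 e]
    · rcases he with ⟨e, -⟩ | ⟨e, -⟩; exacts [c1b2 e, c1b3 e]
  have n23 : ¬ G.Adj c₂ c₃ := by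
    intro hw
    rcases (hiff c₂ c₃).1 hw with he | he | he | he | he | he
    · exact not21 ((Walk.cons h₁ Q₁).fst_mem_support_of_mem_edges he)
    · exact not32 ((Walk.cons h₂ Q₂).snd_mem_support_of_mem_edges he)
    · exact not23 ((Walk.cons h₃ Q₃).fst_mem_support_of_mem_edges he)
    all_goals rw [Sym2.eq_iff] at he
    · rcases he with ⟨e, -⟩ | ⟨e, -⟩; exacts [c2b1 e, c2b2 e]
    · rcases he with ⟨e, -⟩ | ⟨e, -⟩; exacts [c2b1 e, c2b3 e]
    · rcases he with ⟨e, -⟩ | ⟨e, -⟩; exacts [c2b2 e, c2b3 e]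
  have nbr : ∀ w, G.Adj a w → w = c₁ ∨ w = c₂ ∨ w = c₃ := by
    intro w hw
    rcases (hiff a w).1 hw with he | he | he | he | he | he
    · exact Or.inl (head_edge_eq ha1 he)
    · exact Or.inr (Or.inl (head_edge_eq ha2 he))
    · exact Or.inr (Or.inr (head_edge_eq ha3 he))
    all_goals rw [Sym2.eq_iff] at he
    · rcases he with ⟨e, -⟩ | ⟨e, -⟩; exacts [absurd e aneb1, absurd e aneb2]
    · rcases he with ⟨e, -⟩ | ⟨e, -⟩; exacts [absurd e aneb1, absurd e aneb3]
    · rcases he with ⟨e, -⟩ | ⟨e, -⟩; exacts [absurd e aneb2, absurd e aneb3]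
  have nab : ¬ G.Adj a b₁ := by
    intro hw
    rcases (hiff a b₁).1 hw with he | he | he | he | he | he
    · exact c1b1 (head_edge_eq ha1 he).symm
    · exact b1not2 ((Walk.cons h₂ Q₂).snd_mem_support_of_mem_edges he)
    · exact b1not3 ((Walk.cons h₃ Q₃).snd_mem_support_of_mem_edges he)
    all_goals rw [Sym2.eq_iff] at he
    · rcases he with ⟨e, -⟩ | ⟨e, -⟩; exacts [absurd e aneb1, absurd e aneb2]
    · rcases he with ⟨e, -⟩ | ⟨e, -⟩; exacts [absurd e aneb1, absurd e aneb3]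
    · rcases he with ⟨e, -⟩ | ⟨e, -⟩; exacts [absurd e aneb2, absurd e aneb3]
  set S : Set V := {c₁, c₂, c₃} with hS
  have haS : a ∉ S := by
    simp only [hS, Set.mem_insert_iff, Set.mem_singleton_iff]
    push_neg
    exact ⟨fun e => cne_a1 e.symm, fun e => cne_a2 e.symm, fun e => cne_a3 e.symm⟩
  have hbS : b₁ ∉ S := by
    simp only [hS, Set.mem_insert_iff, Set.mem_singleton_iff]
    push_neg
    exact ⟨fun e => c1b1 e.symm, fun e => c2b1 e.symm, fun e => c3b1 e.symm⟩
  have hminsep : IsMinSep G a b₁ S := by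
    constructor
    · refine ⟨haS, hbS, ?_⟩
      rintro ⟨p, hp⟩
      cases p with
      | nil => exact aneb1 rfl
      | @cons _ w _ hadj q =>
        refine hp w (by simp) ?_
        rcases nbr w hadj with rfl | rfl | rfl
        · exact Set.mem_insert _ _
        · exact Set.mem_insert_of_mem _ (Set.mem_insert _ _)
        · exact Set.mem_insert_of_mem _ (Set.mem_insert_of_mem _ rfl)
    · intro T hT hsepT
      obtain ⟨x, hxS, hxT⟩ := Set.exists_of_ssubset hT
      apply hsepT.2.2
      rcases hxS with rfl | rfl | rfl
      · refine ⟨Walk.cons h₁ Q₁, ?_⟩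
        intro v hv hvT
        rcases hT.subset hvT with rfl | rfl | rfl
        exacts [hxT hvT, not21 hv, not31 hv]
      · refine ⟨(Walk.cons h₂ Q₂).concat e12.symm, ?_⟩
        intro v hv hvT
        rw [Walk.support_concat, List.mem_append] at hv
        rcases hT.subset hvT with rfl | rfl | rfl
        · rcases hv with hv | hv
          · exact not12 hv
          · exact c1b1 (by simpa using hv)
        · exact hxT hvT
        · rcases hv with hv | hv
          · exact not32 hv
          · exact c3b1 (by simpa using hv)
      · refine ⟨(Walk.cons h₃ Q₃).concat e13.symm, ?_⟩
        intro v hv hvT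
        rw [Walk.support_concat, List.mem_append] at hv
        rcases hT.subset hvT with rfl | rfl | rfl
        · rcases hv with hv | hv
          · exact not13 hv
          · exact c1b1 (by simpa using hv)
        · rcases hv with hv | hv
          · exact not23 hv
          · exact c2b1 (by simpa using hv)
        · exact hxT hvT
  have hU := hG S ⟨a, b₁, aneb1, nab, hminsep⟩
  exact not_union_two (by simp [hS]) (by simp [hS]) (by simp [hS]) d12 d13 d23 n12 n13 n23 hU

lemma pyramid_false {G : SimpleGraph V} (ht : IsPyramid G) (hG : MemGk 2 G) : False := by
  obtain ⟨a, b₁, b₂, b₃, P₁, P₂, P₃, e12, e13, e23, hp1, hp2, hp3, hl1, hl2, hl3, hlong,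
    h12, h13, h23, hcov, hiff⟩ := ht
  clear hcov
  rcases hlong with ⟨g1, g2⟩ | ⟨g1, g2⟩ | ⟨g1, g2⟩
  · exact pyramid_core e12 e13 e23 hp1 hp2 hp3 g1 g2 hl3 h12 h13 h23 hiff hG
  · refine pyramid_core e13 e12 e23.symm hp1 hp3 hp2 g1 g2 hl2 h13 h12
      (fun v hv hv' => h23 v hv' hv) (fun u v => (hiff u v).trans ?_) hG
    rw [show (s(b₃, b₂) : Sym2 V) = s(b₂, b₃) from Sym2.eq_swap]
    tauto
  · refine pyramid_core e23 e12.symm e13.symm hp2 hp3 hp1 g1 g2 hl1 h23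
      (fun v hv hv' => h12 v hv' hv) (fun v hv hv' => h13 v hv' hv)
      (fun u v => (hiff u v).trans ?_) hG
    rw [show (s(b₂, b₁) : Sym2 V) = s(b₁, b₂) from Sym2.eq_swap,
      show (s(b₃, b₁) : Sym2 V) = s(b₁, b₃) from Sym2.eq_swap]
    tauto

lemma prism_core {G : SimpleGraph V} {a₁ a₂ a₃ b₁ b₂ b₃ : V}
    {P₁ : G.Walk a₁ b₁} {P₂ : G.Walk a₂ b₂} {P₃ : G.Walk a₃ b₃}
    (ea12 : G.Adj a₁ a₂) (ea13 : G.Adj a₁ a₃) (ea23 : G.Adj a₂ a₃)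
    (eb12 : G.Adj b₁ b₂) (eb13 : G.Adj b₁ b₃) (eb23 : G.Adj b₂ b₃)
    (hp1 : P₁.IsPath) (hp2 : P₂.IsPath) (hp3 : P₃.IsPath)
    (hl1 : 2 ≤ P₁.length) (hl2 : 1 ≤ P₂.length) (hl3 : 1 ≤ P₃.length)
    (h12 : ∀ v : V, v ∈ P₁.support → v ∈ P₂.support → False)
    (h13 : ∀ v : V, v ∈ P₁.support → v ∈ P₃.support → False)
    (h23 : ∀ v : V, v ∈ P₂.support → v ∈ P₃.support → False)
    (hiff : ∀ u v : V, G.Adj u v ↔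
      s(u, v) ∈ P₁.edges ∨ s(u, v) ∈ P₂.edges ∨ s(u, v) ∈ P₃.edges ∨
      s(u, v) = s(a₁, a₂) ∨ s(u, v) = s(a₁, a₃) ∨ s(u, v) = s(a₂, a₃) ∨
      s(u, v) = s(b₁, b₂) ∨ s(u, v) = s(b₁, b₃) ∨ s(u, v) = s(b₂, b₃))
    (hG : MemGk 2 G) : False := by
  classical
  cases P₁ with
  | nil => simp at hl1
  | @cons _ c₁ _ h₁ Q₁ =>
  cases P₂ with
  | nil => simp at hl2
  | @cons _ c₂ _ h₂ Q₂ =>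
  cases P₃ with
  | nil => simp at hl3
  | @cons _ c₃ _ h₃ Q₃ =>
  rw [Walk.cons_isPath_iff] at hp1 hp2 hp3
  obtain ⟨hQ1, ha1⟩ := hp1
  obtain ⟨hQ2, ha2⟩ := hp2
  obtain ⟨hQ3, ha3⟩ := hp3
  simp only [Walk.length_cons] at hl1 hl2 hl3
  have hq1 : 1 ≤ Q₁.length := by omega
  -- memberships
  have mema1 : a₁ ∈ (Walk.cons h₁ Q₁).support := Walk.start_mem_support _
  have mema2 : a₂ ∈ (Walk.cons h₂ Q₂).support := Walk.start_mem_support _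
  have mema3 : a₃ ∈ (Walk.cons h₃ Q₃).support := Walk.start_mem_support _
  have memb1 : b₁ ∈ (Walk.cons h₁ Q₁).support := Walk.end_mem_support _
  have memb2 : b₂ ∈ (Walk.cons h₂ Q₂).support := Walk.end_mem_support _
  have memb3 : b₃ ∈ (Walk.cons h₃ Q₃).support := Walk.end_mem_support _
  have memc1 : c₁ ∈ (Walk.cons h₁ Q₁).support := by simp
  -- basic ne facts
  have c1a1 : c₁ ≠ a₁ := fun e => ha1 (e ▸ Q₁.start_mem_support)
  have c1b1 : c₁ ≠ b₁ := by
    rintro rfl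
    rw [Walk.isPath_iff_eq_nil] at hQ1
    rw [hQ1] at hq1; simp at hq1
  have a1b1 : a₁ ≠ b₁ := fun e => ha1 (by rw [e]; exact Q₁.end_mem_support)
  have a2b2 : a₂ ≠ b₂ := fun e => ha2 (by rw [e]; exact Q₂.end_mem_support)
  have a3b3 : a₃ ≠ b₃ := fun e => ha3 (by rw [e]; exact Q₃.end_mem_support)
  -- cross ne facts (different paths)
  have c1a2 : c₁ ≠ a₂ := fun e => h12 c₁ memc1 (by rw [e]; exact mema2)
  have c1b2 : c₁ ≠ b₂ := fun e => h12 c₁ memc1 (by rw [e]; exact memb2)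
  have c1a3 : c₁ ≠ a₃ := fun e => h13 c₁ memc1 (by rw [e]; exact mema3)
  have c1b3 : c₁ ≠ b₃ := fun e => h13 c₁ memc1 (by rw [e]; exact memb3)
  have a1b2 : a₁ ≠ b₂ := fun e => h12 a₁ mema1 (by rw [e]; exact memb2)
  have a1b3 : a₁ ≠ b₃ := fun e => h13 a₁ mema1 (by rw [e]; exact memb3)
  have a2b1 : a₂ ≠ b₁ := fun e => h12 a₂ (by rw [e]; exact memb1) mema2
  have a2b3 : a₂ ≠ b₃ := fun e => h23 a₂ mema2 (by rw [e]; exact memb3)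
  have a3b1 : a₃ ≠ b₁ := fun e => h13 a₃ (by rw [e]; exact memb1) mema3
  have a3b2 : a₃ ≠ b₂ := fun e => h23 a₃ (by rw [e]; exact memb2) mema3
  have a2b2' := a2b2
  -- adjacency ne
  have a1a2 := ea12.ne
  have a1a3 := ea13.ne
  have a2a3 := ea23.ne
  have b1b2 := eb12.ne
  have b1b3 := eb13.ne
  have b2b3 := eb23.ne
  -- c₁ not on other paths
  have c1not2 : c₁ ∉ (Walk.cons h₂ Q₂).support := fun hm => h12 c₁ memc1 hm
  have c1not3 : c₁ ∉ (Walk.cons h₃ Q₃).support := fun hm => h13 c₁ memc1 hm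
  -- nonadjacencies
  have n_c1a2 : ¬ G.Adj c₁ a₂ := by
    intro hw
    rcases (hiff c₁ a₂).1 hw with he | he | he | he | he | he | he | he | he
    · exact h12 a₂ ((Walk.cons h₁ Q₁).snd_mem_support_of_mem_edges he) mema2
    · exact c1not2 ((Walk.cons h₂ Q₂).fst_mem_support_of_mem_edges he)
    · exact c1not3 ((Walk.cons h₃ Q₃).fst_mem_support_of_mem_edges he)
    all_goals rw [Sym2.eq_iff] at he
    · rcases he with ⟨e, -⟩ | ⟨e, -⟩; exacts [c1a1 e, c1a2 e]
    · rcases he with ⟨e, -⟩ | ⟨e, -⟩; exacts [c1a1 e, c1a3 e]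
    · rcases he with ⟨e, -⟩ | ⟨e, -⟩; exacts [c1a2 e, c1a3 e]
    · rcases he with ⟨e, -⟩ | ⟨e, -⟩; exacts [c1b1 e, c1b2 e]
    · rcases he with ⟨e, -⟩ | ⟨e, -⟩; exacts [c1b1 e, c1b3 e]
    · rcases he with ⟨e, -⟩ | ⟨e, -⟩; exacts [c1b2 e, c1b3 e]
  have n_c1b3 : ¬ G.Adj c₁ b₃ := by
    intro hw
    rcases (hiff c₁ b₃).1 hw with he | he | he | he | he | he | he | he | he
    · exact h13 b₃ ((Walk.cons h₁ Q₁).snd_mem_support_of_mem_edges he) memb3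
    · exact c1not2 ((Walk.cons h₂ Q₂).fst_mem_support_of_mem_edges he)
    · exact c1not3 ((Walk.cons h₃ Q₃).fst_mem_support_of_mem_edges he)
    all_goals rw [Sym2.eq_iff] at he
    · rcases he with ⟨e, -⟩ | ⟨e, -⟩; exacts [c1a1 e, c1a2 e]
    · rcases he with ⟨e, -⟩ | ⟨e, -⟩; exacts [c1a1 e, c1a3 e]
    · rcases he with ⟨e, -⟩ | ⟨e, -⟩; exacts [c1a2 e, c1a3 e]
    · rcases he with ⟨e, -⟩ | ⟨e, -⟩; exacts [c1b1 e, c1b2 e]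
    · rcases he with ⟨e, -⟩ | ⟨e, -⟩; exacts [c1b1 e, c1b3 e]
    · rcases he with ⟨e, -⟩ | ⟨e, -⟩; exacts [c1b2 e, c1b3 e]
  have n_a2b3 : ¬ G.Adj a₂ b₃ := by
    intro hw
    rcases (hiff a₂ b₃).1 hw with he | he | he | he | he | he | he | he | he
    · exact h12 a₂ ((Walk.cons h₁ Q₁).fst_mem_support_of_mem_edges he) mema2
    · exact h23 b₃ ((Walk.cons h₂ Q₂).snd_mem_support_of_mem_edges he) memb3
    · exact h23 a₂ mema2 ((Walk.cons h₃ Q₃).fst_mem_support_of_mem_edges he)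
    all_goals rw [Sym2.eq_iff] at he
    · rcases he with ⟨e, -⟩ | ⟨-, e⟩; exacts [a1a2 e.symm, a1b3 e.symm]
    · rcases he with ⟨e, -⟩ | ⟨e, -⟩; exacts [a1a2 e.symm, a2a3 e]
    · rcases he with ⟨-, e⟩ | ⟨e, -⟩; exacts [a3b3 e.symm, a2a3 e]
    · rcases he with ⟨e, -⟩ | ⟨e, -⟩; exacts [a2b1 e, a2b2' e]
    · rcases he with ⟨e, -⟩ | ⟨e, -⟩; exacts [a2b1 e, a2b3 e]
    · rcases he with ⟨e, -⟩ | ⟨e, -⟩; exacts [a2b2' e, a2b3 e]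
  have n_a1b2 : ¬ G.Adj a₁ b₂ := by
    intro hw
    rcases (hiff a₁ b₂).1 hw with he | he | he | he | he | he | he | he | he
    · exact h12 b₂ ((Walk.cons h₁ Q₁).snd_mem_support_of_mem_edges he) memb2
    · exact h12 a₁ mema1 ((Walk.cons h₂ Q₂).fst_mem_support_of_mem_edges he)
    · exact h13 a₁ mema1 ((Walk.cons h₃ Q₃).fst_mem_support_of_mem_edges he)
    all_goals rw [Sym2.eq_iff] at he
    · rcases he with ⟨-, e⟩ | ⟨e, -⟩; exacts [a2b2' e.symm, a1a2 e]
    · rcases he with ⟨-, e⟩ | ⟨e, -⟩; exacts [a3b2 e.symm, a1a3 e]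
    · rcases he with ⟨e, -⟩ | ⟨e, -⟩; exacts [a1a2 e, a1a3 e]
    · rcases he with ⟨e, -⟩ | ⟨e, -⟩; exacts [a1b1 e, a1b2 e]
    · rcases he with ⟨e, -⟩ | ⟨e, -⟩; exacts [a1b1 e, a1b3 e]
    · rcases he with ⟨e, -⟩ | ⟨e, -⟩; exacts [a1b2 e, a1b3 e]
  set S : Set V := {c₁, a₂, b₃} with hS
  -- closure set
  set A : Set V := insert a₁ {v | v ∈ (Walk.cons h₃ Q₃).support ∧ v ≠ b₃} with hA
  have hcl : ∀ u w, u ∈ A → G.Adj u w → w ∈ A ∪ S := by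
    intro u w hu hadj
    rcases hu with rfl | ⟨hu3, hub3⟩
    · rcases (hiff u w).1 hadj with he | he | he | he | he | he | he | he | he
      · exact Or.inr (Or.inl (head_edge_eq ha1 he))
      · exact absurd ((Walk.cons h₂ Q₂).fst_mem_support_of_mem_edges he)
          (fun hm => h12 u mema1 hm)
      · exact absurd ((Walk.cons h₃ Q₃).fst_mem_support_of_mem_edges he)
          (fun hm => h13 u mema1 hm)
      all_goals rw [Sym2.eq_iff] at he
      · rcases he with ⟨-, rfl⟩ | ⟨e, -⟩
        · exact Or.inr (Or.inr (Or.inl rfl))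
        · exact absurd e a1a2
      · rcases he with ⟨-, rfl⟩ | ⟨e, -⟩
        · exact Or.inl (Or.inr ⟨mema3, fun e => a3b3 e⟩)
        · exact absurd e a1a3
      · rcases he with ⟨e, -⟩ | ⟨e, -⟩; exacts [absurd e a1a2, absurd e a1a3]
      · rcases he with ⟨e, -⟩ | ⟨e, -⟩; exacts [absurd e a1b1, absurd e a1b2]
      · rcases he with ⟨e, -⟩ | ⟨e, -⟩; exacts [absurd e a1b1, absurd e a1b3]
      · rcases he with ⟨e, -⟩ | ⟨e, -⟩; exacts [absurd e a1b2, absurd e a1b3]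
    · rcases (hiff u w).1 hadj with he | he | he | he | he | he | he | he | he
      · exact absurd ((Walk.cons h₁ Q₁).fst_mem_support_of_mem_edges he)
          (fun hm => h13 u hm hu3)
      · exact absurd ((Walk.cons h₂ Q₂).fst_mem_support_of_mem_edges he)
          (fun hm => h23 u hm hu3)
      · have hw3 := (Walk.cons h₃ Q₃).snd_mem_support_of_mem_edges he
        by_cases hwb : w = b₃
        · exact Or.inr (Or.inr (Or.inr (by simp [hS, hwb])))
        · exact Or.inl (Or.inr ⟨hw3, hwb⟩)
      all_goals rw [Sym2.eq_iff] at he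
      · rcases he with ⟨e, -⟩ | ⟨e, -⟩
        · exact absurd hu3 (fun hm => h13 u (by rw [e]; exact mema1) hm)
        · exact absurd hu3 (fun hm => h23 u (by rw [e]; exact mema2) hm)
      · rcases he with ⟨e, -⟩ | ⟨-, rfl⟩
        · exact absurd hu3 (fun hm => h13 u (by rw [e]; exact mema1) hm)
        · exact Or.inl (Or.inl rfl)
      · rcases he with ⟨e, -⟩ | ⟨-, rfl⟩
        · exact absurd hu3 (fun hm => h23 u (by rw [e]; exact mema2) hm)
        · exact Or.inr (Or.inr (Or.inl rfl))
      · rcases he with ⟨e, -⟩ | ⟨e, -⟩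
        · exact absurd hu3 (fun hm => h13 u (by rw [e]; exact memb1) hm)
        · exact absurd hu3 (fun hm => h23 u (by rw [e]; exact memb2) hm)
      · rcases he with ⟨e, -⟩ | ⟨e, -⟩
        · exact absurd hu3 (fun hm => h13 u (by rw [e]; exact memb1) hm)
        · exact absurd e hub3
      · rcases he with ⟨e, -⟩ | ⟨e, -⟩
        · exact absurd hu3 (fun hm => h23 u (by rw [e]; exact memb2) hm)
        · exact absurd e hub3
  have ha1A : a₁ ∈ A := Or.inl rfl
  have hb2A : b₂ ∉ A := by
    rintro (e | ⟨hm, -⟩)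
    · exact a1b2 e.symm
    · exact h23 b₂ memb2 hm
  have ha1S : a₁ ∉ S := by
    simp only [hS, Set.mem_insert_iff, Set.mem_singleton_iff]
    push_neg
    exact ⟨fun e => c1a1 e.symm, a1a2, a1b3⟩
  have hb2S : b₂ ∉ S := by
    simp only [hS, Set.mem_insert_iff, Set.mem_singleton_iff]
    push_neg
    exact ⟨fun e => c1b2 e.symm, fun e => a2b2' e.symm, fun e => b2b3 e⟩
  have hminsep : IsMinSep G a₁ b₂ S := by
    constructor
    · exact ⟨ha1S, hb2S, not_connAvoid hcl ha1A hb2A⟩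
    · intro T hT hsepT
      obtain ⟨x, hxS, hxT⟩ := Set.exists_of_ssubset hT
      apply hsepT.2.2
      rcases hxS with rfl | rfl | rfl
      · refine ⟨(Walk.cons h₁ Q₁).concat eb12, ?_⟩
        intro v hv hvT
        rw [Walk.support_concat, List.mem_append] at hv
        rcases hT.subset hvT with rfl | rfl | rfl
        · exact hxT hvT
        · rcases hv with hv | hv
          · exact h12 v hv mema2
          · exact a2b2' (by simpa using hv)
        · rcases hv with hv | hv
          · exact h13 v hv memb3
          · exact b2b3 (Eq.symm (by simpa using hv))
      · refine ⟨Walk.cons ea12 (Walk.cons h₂ Q₂), ?_⟩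
        intro v hv hvT
        rw [Walk.support_cons, List.mem_cons] at hv
        rcases hT.subset hvT with rfl | rfl | rfl
        · rcases hv with rfl | hv
          · exact c1a1 rfl
          · exact c1not2 hv
        · exact hxT hvT
        · rcases hv with rfl | hv
          · exact a1b3 rfl
          · exact h23 v hv memb3
      · refine ⟨Walk.cons ea13 ((Walk.cons h₃ Q₃).concat eb23.symm), ?_⟩
        intro v hv hvT
        rw [Walk.support_cons, List.mem_cons, Walk.support_concat,
          List.mem_append] at hv
        rcases hT.subset hvT with rfl | rfl | rfl
        · rcases hv with rfl | hv | hv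
          · exact c1a1 rfl
          · exact c1not3 hv
          · exact c1b2 (by simpa using hv)
        · rcases hv with rfl | hv | hv
          · exact a1a2 rfl
          · exact h23 v mema2 hv
          · exact a2b2' (by simpa using hv)
        · exact hxT hvT
  have a1neb2 : a₁ ≠ b₂ := a1b2
  have hU := hG S ⟨a₁, b₂, a1neb2, n_a1b2, hminsep⟩
  exact not_union_two (by simp [hS]) (by simp [hS]) (by simp [hS]) c1a2 c1b3 a2b3
    n_c1a2 n_c1b3 n_a2b3 hU

lemma prism_false {G : SimpleGraph V} (ht : IsLongPrism G) (hG : MemGk 2 G) : False := by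
  obtain ⟨a₁, a₂, a₃, b₁, b₂, b₃, P₁, P₂, P₃, ea12, ea13, ea23, eb12, eb13, eb23,
    hp1, hp2, hp3, hl1, hl2, hl3, hlong, h12, h13, h23, hcov, hiff⟩ := ht
  clear hcov
  rcases hlong with g | g | g
  · exact prism_core ea12 ea13 ea23 eb12 eb13 eb23 hp1 hp2 hp3 g hl2 hl3 h12 h13 h23 hiff hG
  · refine prism_core ea12.symm ea23 ea13 eb12.symm eb23 eb13 hp2 hp1 hp3 g hl1 hl3
      (fun v hv hv' => h12 v hv' hv) h23 h13 (fun u v => (hiff u v).trans ?_) hG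
    rw [show (s(a₂, a₁) : Sym2 V) = s(a₁, a₂) from Sym2.eq_swap,
      show (s(b₂, b₁) : Sym2 V) = s(b₁, b₂) from Sym2.eq_swap]
    tauto
  · refine prism_core ea13.symm ea23.symm ea12 eb13.symm eb23.symm eb12 hp3 hp1 hp2 g hl1 hl2
      (fun v hv hv' => h13 v hv' hv) (fun v hv hv' => h23 v hv' hv) h12
      (fun u v => (hiff u v).trans ?_) hG
    rw [show (s(a₃, a₁) : Sym2 V) = s(a₁, a₃) from Sym2.eq_swap,
      show (s(a₃, a₂) : Sym2 V) = s(a₂, a₃) from Sym2.eq_swap,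
      show (s(b₃, b₁) : Sym2 V) = s(b₁, b₃) from Sym2.eq_swap,
      show (s(b₃, b₂) : Sym2 V) = s(b₂, b₃) from Sym2.eq_swap]
    tauto

lemma memGk_induce [Finite V] {G : SimpleGraph V} {k : ℕ} (hG : MemGk k G) (s : Set V) :
    MemGk k (G.induce s) := by
  classical
  intro S' hS'
  obtain ⟨a, b, hab, hnadj, ⟨⟨haS', hbS', hconn'⟩, hmin'⟩⟩ := hS'
  set T : Set V := (Subtype.val '' S') ∪ {v | v ∉ s} with hT
  have notmem : ∀ x : ↥s, x ∉ S' → (↑x : V) ∉ T := by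
    rintro x hx (⟨y, hy, hyx⟩ | hns)
    · exact hx (Subtype.val_injective hyx ▸ hy)
    · exact hns x.2
  have hTsep : IsSep G ↑a ↑b T := by
    refine ⟨notmem a haS', notmem b hbS', ?_⟩
    rintro ⟨p, hp⟩
    have hsupp : ∀ v ∈ p.support, v ∈ s := by
      intro v hv
      by_contra hns
      exact hp v hv (Or.inr hns)
    obtain ⟨q, hq⟩ := lift_walk p a.2 b.2 hsupp
    refine hconn' ⟨q.copy (Subtype.ext rfl) (Subtype.ext rfl), ?_⟩
    intro y hy hyS'
    rw [Walk.support_copy] at hy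
    exact hp ↑y (hq y hy) (Or.inl ⟨y, hyS', rfl⟩)
  obtain ⟨T', hT'sub, hT'min⟩ := exists_minsep_subset T hTsep
  have hSsub : Subtype.val '' S' ⊆ T' := by
    rintro _ ⟨x, hxS', rfl⟩
    by_contra hxT'
    have hss : S' \ {x} ⊂ S' := Set.sdiff_singleton_ssubset.2 hxS'
    have hnsep := hmin' _ hss
    have hca : ConnAvoid (G.induce s) (S' \ {x}) a b := by
      by_contra hnc
      exact hnsep ⟨fun h => haS' h.1, fun h => hbS' h.1, hnc⟩
    obtain ⟨q, hq⟩ := hca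
    apply hT'min.1.2.2
    refine ⟨q.map (inducedHom G s), ?_⟩
    intro v hv hvT'
    replace hv : v ∈ q.support.map (inducedHom G s) := by rw [← Walk.support_map]; exact hv
    rw [List.mem_map] at hv
    obtain ⟨y, hy, rfl⟩ := hv
    rcases hT'sub hvT' with ⟨z, hz, hzy⟩ | hns
    · have hzy' : z = y := Subtype.val_injective hzy
      rw [hzy'] at hz
      have hyx : y ≠ x := by
        rintro rfl
        exact hxT' hvT'
      exact hq y hy ⟨hz, hyx⟩
    · exact hns y.2
  have hab' : (↑a : V) ≠ ↑b := fun e => hab (Subtype.ext e)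
  have hnadj' : ¬ G.Adj ↑a ↑b := fun h => hnadj (by simpa using h)
  obtain ⟨f, hf, hfT⟩ := hG T' ⟨↑a, ↑b, hab', hnadj', hT'min⟩
  refine ⟨fun i => {x : ↥s | ↑x ∈ f i ∧ x ∈ S'}, ?_, ?_⟩
  · intro i x hx y hy hxy
    have : G.Adj ↑x ↑y := hf i hx.1 hy.1 (fun e => hxy (Subtype.ext e))
    simpa using this
  · ext x
    simp only [Set.mem_iUnion, Set.mem_setOf_eq]
    constructor
    · intro hx
      have hxT' : (↑x : V) ∈ T' := hSsub ⟨x, hx, rfl⟩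
      rw [hfT, Set.mem_iUnion] at hxT'
      obtain ⟨i, hi⟩ := hxT'
      exact ⟨i, hi, hx⟩
    · rintro ⟨i, -, hx⟩
      exact hx

lemma wheel_core {G : SimpleGraph V} {v p q : V} (cc : G.Walk p p)
    (hnodup : cc.support.tail.Nodup)
    (hvsup : v ∉ cc.support)
    (hcov : ∀ u, u = v ∨ u ∈ cc.support)
    (hhole : ∀ u w, u ∈ cc.support → w ∈ cc.support → G.Adj u w → s(u, w) ∈ cc.edges)
    (hq : q ∈ cc.support) (hpq : p ≠ q)
    (hAdjvp : G.Adj v p) (hAdjvq : G.Adj v q)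
    (hnN : ∀ w : G.Walk p q, ∃ z ∈ w.support, ¬ (z ∈ cc.support ∧ G.Adj v z))
    (hG : MemGk 2 G) : False := by
  classical
  have hpsup : p ∈ cc.support := cc.start_mem_support
  have hnadjpq : ¬ G.Adj p q := by
    intro hadj
    obtain ⟨z, hz, hbad⟩ := hnN (Walk.cons hadj Walk.nil)
    simp only [Walk.support_cons, Walk.support_nil, List.mem_cons, List.mem_singleton] at hz
    rcases hz with rfl | rfl | h
    · exact hbad ⟨hpsup, hAdjvp⟩
    · exact hbad ⟨hq, hAdjvq⟩
    · simp at h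
  cases cc with
  | nil =>
    have : q = p := by simpa using hq
    exact hpq this.symm
  | @cons _ w₀ _ he d =>
  have ndd : d.support.Nodup := by simpa using hnodup
  have hqd : q ∈ d.support := by
    rcases (by simpa using hq : q = p ∨ q ∈ d.support) with e | h
    · exact absurd e.symm hpq
    · exact h
  set tk := d.takeUntil q hqd with htk
  set dr := d.dropUntil q hqd with hdr
  have spec : tk.append dr = d := d.take_spec hqd
  have hdsupp : d.support = tk.support ++ dr.support.tail := by
    rw [← spec, Walk.support_append]
  have hnd' : tk.support.Nodup ∧ dr.support.tail.Nodup ∧ tk.support.Disjoint dr.support.tail := by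
    rw [hdsupp, List.nodup_append] at ndd
    exact ⟨ndd.1, ndd.2.1, fun a ha hb => ndd.2.2 a ha a hb rfl⟩
  obtain ⟨ndtk, nddrt, disjd⟩ := hnd'
  have hpdr : p ∈ dr.support := dr.end_mem_support
  have hpdrt : p ∈ dr.support.tail := by
    rcases (by rw [dr.support_eq_cons] at hpdr; exact List.mem_cons.1 hpdr : p = q ∨ p ∈ dr.support.tail)
      with e | h
    · exact absurd e hpq
    · exact h
  have hptk : p ∉ tk.support := fun hm => disjd hm hpdrt
  set A : G.Walk p q := Walk.cons he tk with hAdef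
  set B : G.Walk q p := dr with hBdef
  have hAsupp : A.support = p :: tk.support := by rw [hAdef, Walk.support_cons]
  have ndA : A.support.Nodup := by
    rw [hAsupp]
    exact List.nodup_cons.2 ⟨hptk, ndtk⟩
  have hqtk : q ∈ tk.support := tk.end_mem_support
  have ndB : B.support.Nodup := by
    rw [B.support_eq_cons]
    exact List.nodup_cons.2 ⟨fun hm => disjd hqtk hm, nddrt⟩
  have hsubA : ∀ z ∈ A.support, z ∈ (Walk.cons he d).support := by
    intro z hz
    rw [hAsupp, List.mem_cons] at hz
    rcases hz with rfl | hz
    · exact Walk.start_mem_support _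
    · simp only [Walk.support_cons, List.mem_cons]
      exact Or.inr (d.support_takeUntil_subset hqd hz)
  have hsubB : ∀ z ∈ B.support, z ∈ (Walk.cons he d).support := by
    intro z hz
    simp only [Walk.support_cons, List.mem_cons]
    exact Or.inr (d.support_dropUntil_subset hqd hz)
  have hABinter : ∀ u, u ∈ A.support → u ∈ B.support → u = p ∨ u = q := by
    intro u huA huB
    rw [hAsupp, List.mem_cons] at huA
    rw [B.support_eq_cons, List.mem_cons] at huB
    rcases huA with rfl | huA
    · exact Or.inl rfl
    rcases huB with rfl | huB
    · exact Or.inr rfl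
    · exact absurd huB (disjd huA)
  -- find the two gap vertices
  obtain ⟨g₁, hg₁A, hg₁bad⟩ := hnN A
  have hg₁sup : g₁ ∈ (Walk.cons he d).support := hsubA g₁ hg₁A
  have hg₁adj : ¬ G.Adj v g₁ := fun h => hg₁bad ⟨hg₁sup, h⟩
  have hg₁p : g₁ ≠ p := by rintro rfl; exact hg₁adj hAdjvp
  have hg₁q : g₁ ≠ q := by rintro rfl; exact hg₁adj hAdjvq
  obtain ⟨g₂, hg₂A, hg₂bad⟩ := hnN B.reverse
  have hg₂B : g₂ ∈ B.support := by rwa [Walk.support_reverse, List.mem_reverse] at hg₂A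
  have hg₂sup : g₂ ∈ (Walk.cons he d).support := hsubB g₂ hg₂B
  have hg₂adj : ¬ G.Adj v g₂ := fun h => hg₂bad ⟨hg₂sup, h⟩
  have hg₂p : g₂ ≠ p := by rintro rfl; exact hg₂adj hAdjvp
  have hg₂q : g₂ ≠ q := by rintro rfl; exact hg₂adj hAdjvq
  have hg₁B : g₁ ∉ B.support := by
    intro hm
    rcases hABinter g₁ hg₁A hm with e | e
    exacts [hg₁p e, hg₁q e]
  have hg₂nA : g₂ ∉ A.support := by
    intro hm
    rcases hABinter g₂ hm hg₂B with e | e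
    exacts [hg₂p e, hg₂q e]
  have hg12 : g₁ ≠ g₂ := by
    rintro rfl
    exact hg₁B hg₂B
  have hvp : v ≠ p := fun e => hvsup (e ▸ hpsup)
  have hvq : v ≠ q := fun e => hvsup (e ▸ hq)
  have hvg₁ : v ≠ g₁ := fun e => hvsup (e ▸ hg₁sup)
  have hvg₂ : v ≠ g₂ := fun e => hvsup (e ▸ hg₂sup)
  -- splits
  set A₁ := A.takeUntil g₁ hg₁A with hA₁
  set A₂ := A.dropUntil g₁ hg₁A with hA₂
  set B₁ := B.takeUntil g₂ hg₂B with hB₁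
  set B₂ := B.dropUntil g₂ hg₂B with hB₂
  have specA : A₁.append A₂ = A := A.take_spec hg₁A
  have specB : B₁.append B₂ = B := B.take_spec hg₂B
  have hAsupp2 : A.support = A₁.support ++ A₂.support.tail := by
    rw [← specA, Walk.support_append]
  have hBsupp2 : B.support = B₁.support ++ B₂.support.tail := by
    rw [← specB, Walk.support_append]
  have hndA' : A₁.support.Nodup ∧ A₂.support.tail.Nodup ∧
      A₁.support.Disjoint A₂.support.tail := by
    rw [hAsupp2, List.nodup_append] at ndA
    exact ⟨ndA.1, ndA.2.1, fun a ha hb => ndA.2.2 a ha a hb rfl⟩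
  obtain ⟨ndA₁, ndA₂t, disjA⟩ := hndA'
  have hndB' : B₁.support.Nodup ∧ B₂.support.tail.Nodup ∧
      B₁.support.Disjoint B₂.support.tail := by
    rw [hBsupp2, List.nodup_append] at ndB
    exact ⟨ndB.1, ndB.2.1, fun a ha hb => ndB.2.2 a ha a hb rfl⟩
  obtain ⟨ndB₁, ndB₂t, disjB⟩ := hndB'
  have memA₁sub : ∀ z ∈ A₁.support, z ∈ A.support := A.support_takeUntil_subset hg₁A
  have memA₂sub : ∀ z ∈ A₂.support, z ∈ A.support := A.support_dropUntil_subset hg₁A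
  have memB₁sub : ∀ z ∈ B₁.support, z ∈ B.support := B.support_takeUntil_subset hg₂B
  have memB₂sub : ∀ z ∈ B₂.support, z ∈ B.support := B.support_dropUntil_subset hg₂B
  have hqA₂t : q ∈ A₂.support.tail := by
    have : q ∈ A₂.support := A₂.end_mem_support
    rw [A₂.support_eq_cons, List.mem_cons] at this
    rcases this with e | h
    · exact absurd e.symm hg₁q
    · exact h
  have hqA₁ : q ∉ A₁.support := fun hm => disjA hm hqA₂t
  have hpB₂t : p ∈ B₂.support.tail := by
    have : p ∈ B₂.support := B₂.end_mem_support
    rw [B₂.support_eq_cons, List.mem_cons] at this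
    rcases this with e | h
    · exact absurd e.symm hg₂p
    · exact h
  have hpB₁ : p ∉ B₁.support := fun hm => disjB hm hpB₂t
  have hqB₂ : q ∉ B₂.support := by
    intro hm
    rw [B₂.support_eq_cons, List.mem_cons] at hm
    rcases hm with e | h
    · exact hg₂q e.symm
    · exact disjB B₁.start_mem_support h
  have hpA₂ : p ∉ A₂.support := by
    intro hm
    rw [A₂.support_eq_cons, List.mem_cons] at hm
    rcases hm with e | h
    · exact hg₁p e.symm
    · exact disjA A₁.start_mem_support h
  -- the one-side set
  set α : Set V := {u | (u ∈ A₁.support ∨ u ∈ B₂.support) ∧ u ≠ g₁ ∧ u ≠ g₂} with hα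
  set S : Set V := {v, g₁, g₂} with hS
  have hpα : p ∈ α := ⟨Or.inl A₁.start_mem_support, hg₁p.symm, hg₂p.symm⟩
  have hqα : q ∉ α := by
    rintro ⟨hm | hm, -, -⟩
    exacts [hqA₁ hm, hqB₂ hm]
  have hedges : (Walk.cons he d).edges =
      (A₁.edges ++ A₂.edges) ++ (B₁.edges ++ B₂.edges) := by
    have hce : Walk.cons he d = A.append B := by
      rw [hAdef, hBdef, Walk.cons_append, spec]
    rw [hce, Walk.edges_append, ← specA, ← specB, Walk.edges_append, Walk.edges_append]
  have hcl : ∀ u w, u ∈ α → G.Adj u w → w ∈ α ∪ S := by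
    intro u w hu hadj
    obtain ⟨huAB, hug1, hug2⟩ := hu
    rcases hcov w with rfl | hwsup
    · exact Or.inr (Set.mem_insert _ _)
    have husup : u ∈ (Walk.cons he d).support := by
      rcases huAB with h | h
      exacts [hsubA u (memA₁sub u h), hsubB u (memB₂sub u h)]
    have hedge := hhole u w husup hwsup hadj
    rw [hedges] at hedge
    have hwcase : ∀ (hw : w ∈ A₁.support ∨ w ∈ B₂.support), w ∈ α ∪ S := by
      intro hw
      by_cases e1 : w = g₁
      · exact Or.inr (by simp [hS, e1])
      by_cases e2 : w = g₂
      · exact Or.inr (by simp [hS, e2])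
      · exact Or.inl ⟨hw, e1, e2⟩
    rcases List.mem_append.1 hedge with h1 | h1
    · rcases List.mem_append.1 h1 with h2 | h2
      · exact hwcase (Or.inl (A₁.snd_mem_support_of_mem_edges h2))
      · -- u ∈ A₂.support : impossible
        exfalso
        have huA₂ : u ∈ A₂.support := A₂.fst_mem_support_of_mem_edges h2
        rcases huAB with h | h
        · rw [A₂.support_eq_cons, List.mem_cons] at huA₂
          rcases huA₂ with e | hh
          · exact hug1 e
          · exact disjA h hh
        · rcases hABinter u (memA₂sub u huA₂) (memB₂sub u h) with rfl | rfl
          · exact hpA₂ huA₂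
          · exact hqB₂ h
    · rcases List.mem_append.1 h1 with h2 | h2
      · exfalso
        have huB₁ : u ∈ B₁.support := B₁.fst_mem_support_of_mem_edges h2
        rcases huAB with h | h
        · rcases hABinter u (memA₁sub u h) (memB₁sub u huB₁) with rfl | rfl
          · exact hpB₁ huB₁
          · exact hqA₁ h
        · rw [B₂.support_eq_cons, List.mem_cons] at h
          rcases h with e | hh
          · exact hug2 e
          · exact disjB huB₁ hh
      · exact hwcase (Or.inr (B₂.snd_mem_support_of_mem_edges h2))
  have hpS : p ∉ S := by
    simp only [hS, Set.mem_insert_iff, Set.mem_singleton_iff]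
    push_neg
    exact ⟨fun e => hvp e.symm, fun e => hg₁p e.symm, fun e => hg₂p e.symm⟩
  have hqS : q ∉ S := by
    simp only [hS, Set.mem_insert_iff, Set.mem_singleton_iff]
    push_neg
    exact ⟨fun e => hvq e.symm, fun e => hg₁q e.symm, fun e => hg₂q e.symm⟩
  have hvB : v ∉ B.support := fun hm => hvsup (hsubB v hm)
  have hvA : v ∉ A.support := fun hm => hvsup (hsubA v hm)
  have hminsep : IsMinSep G p q S := by
    constructor
    · exact ⟨hpS, hqS, not_connAvoid hcl hpα hqα⟩
    · intro T hT hsepT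
      obtain ⟨y, hyS, hyT⟩ := Set.exists_of_ssubset hT
      apply hsepT.2.2
      rcases hyS with rfl | rfl | rfl
      · refine ⟨Walk.cons hAdjvp.symm (Walk.cons hAdjvq Walk.nil), ?_⟩
        intro z hz hzT
        simp only [Walk.support_cons, Walk.support_nil, List.mem_cons,
          List.mem_singleton] at hz
        rcases hT.subset hzT with rfl | rfl | rfl
        · exact hyT hzT
        · rcases hz with e | e | e
          · exact hg₁p e
          · exact hvg₁ e.symm
          · rcases e with e | e
            · exact hg₁q e
            · simp at e
        · rcases hz with e | e | e
          · exact hg₂p e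
          · exact hvg₂ e.symm
          · rcases e with e | e
            · exact hg₂q e
            · simp at e
      · refine ⟨A, ?_⟩
        intro z hz hzT
        rcases hT.subset hzT with rfl | rfl | rfl
        · exact hvA hz
        · exact hyT hzT
        · exact hg₂nA hz
      · refine ⟨B.reverse, ?_⟩
        intro z hz hzT
        rw [Walk.support_reverse, List.mem_reverse] at hz
        rcases hT.subset hzT with rfl | rfl | rfl
        · exact hvB hz
        · exact hg₁B hz
        · exact hyT hzT
  have hnadj12 : ¬ G.Adj g₁ g₂ := by
    intro hadj
    have hedge := hhole g₁ g₂ hg₁sup hg₂sup hadj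
    rw [hedges] at hedge
    rcases List.mem_append.1 hedge with h1 | h1
    · rcases List.mem_append.1 h1 with h2 | h2
      · exact hg₂nA (memA₁sub g₂ (A₁.snd_mem_support_of_mem_edges h2))
      · exact hg₂nA (memA₂sub g₂ (A₂.snd_mem_support_of_mem_edges h2))
    · rcases List.mem_append.1 h1 with h2 | h2
      · exact hg₁B (memB₁sub g₁ (B₁.fst_mem_support_of_mem_edges h2))
      · exact hg₁B (memB₂sub g₁ (B₂.fst_mem_support_of_mem_edges h2))
  have hU := hG S ⟨p, q, hpq, hnadjpq, hminsep⟩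
  exact not_union_two (by simp [hS]) (by simp [hS]) (by simp [hS])
    hvg₁ hvg₂ hg12 (fun h => hg₁adj h) (fun h => hg₂adj h) hnadj12 hU

lemma mem_support_closed {G : SimpleGraph V} {x : V} (c : G.Walk x x) (hc : c ≠ Walk.nil)
    (u : V) : u ∈ c.support ↔ u ∈ c.support.tail := by
  cases c with
  | nil => exact absurd rfl hc
  | cons h d =>
    simp only [Walk.support_cons, List.tail_cons, List.mem_cons]
    constructor
    · rintro (rfl | hm)
      · exact d.end_mem_support
      · exact hm
    · exact Or.inr

lemma brokenWheel_false {G : SimpleGraph V} (ht : IsBrokenWheel G) (hG : MemGk 2 G) :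
    False := by
  classical
  obtain ⟨v, x, c, hcyc, hlen, hvsup, hcov, hhole, hcard, hdisc⟩ := ht
  set N : Set V := {u : V | u ∈ c.support ∧ G.Adj v u} with hN
  have hNne : N.Nonempty := Set.nonempty_of_ncard_ne_zero (by omega)
  have hNinst : Nonempty ↥N := hNne.to_subtype
  obtain ⟨p', q', hnr⟩ : ∃ p' q' : ↥N, ¬ (G.induce N).Reachable p' q' := by
    by_contra hc
    push_neg at hc
    exact hdisc ((connected_iff _).2 ⟨fun u v' => hc u v', hNinst⟩)
  have hpN : (↑p' : V) ∈ N := p'.2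
  have hqN : (↑q' : V) ∈ N := q'.2
  have hnN : ∀ w : G.Walk ↑p' ↑q', ∃ z ∈ w.support, ¬ (z ∈ c.support ∧ G.Adj v z) := by
    intro w
    by_contra hno
    push_neg at hno
    obtain ⟨qw, -⟩ := lift_walk w p'.2 q'.2 (fun z hz => hno z hz)
    exact hnr ⟨qw.copy (Subtype.ext rfl) (Subtype.ext rfl)⟩
  have hpsup : (↑p' : V) ∈ c.support := hpN.1
  have hpq : (↑p' : V) ≠ ↑q' := by
    intro e
    exact hnr (by rw [show p' = q' from Subtype.ext e])
  set c₂ := c.rotate _ hpsup with hc₂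
  have hcyc₂ : c₂.IsCycle := hcyc.rotate hpsup
  have hmem : ∀ u : V, u ∈ c₂.support ↔ u ∈ c.support := by
    intro u
    rw [mem_support_closed c₂ hcyc₂.ne_nil u, mem_support_closed c hcyc.ne_nil u]
    exact (Walk.support_rotate c _ hpsup).mem_iff
  have hedg : ∀ e, e ∈ c₂.edges ↔ e ∈ c.edges := fun e => (Walk.rotate_edges c _ hpsup).mem_iff
  exact wheel_core c₂ hcyc₂.support_nodup
    (fun h => hvsup ((hmem v).1 h))
    (fun u => (hcov u).imp_right ((hmem u).2))
    (fun u w hu hw hadj => (hedg _).2 (hhole u w ((hmem u).1 hu) ((hmem w).1 hw) hadj))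
    ((hmem _).2 hqN.1) hpq hpN.2 hqN.2
    (fun w => (hnN w).imp (fun z hz => ⟨hz.1, fun hb => hz.2 ⟨(hmem z).1 hb.1, hb.2⟩⟩))
    hG

/-- every graph in `𝒢_2` is (theta, pyramid, long prism, broken
wheel)-free, i.e. has no induced subgraph that is a theta, pyramid, long prism, or broken
wheel. -/
theorem statement_15 (V : Type) [Finite V] (G : SimpleGraph V) (hG : MemGk 2 G)
    (s : Set V) :
    ¬ IsTheta (G.induce s) ∧ ¬ IsPyramid (G.induce s) ∧
    ¬ IsLongPrism (G.induce s) ∧ ¬ IsBrokenWheel (G.induce s) := by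
  have hind : MemGk 2 (G.induce s) := memGk_induce hG s
  exact ⟨fun h => theta_false h hind, fun h => pyramid_false h hind,
    fun h => prism_false h hind, fun h => brokenWheel_false h hind⟩

end PaperSep
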